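/- In a commutative ℚ-algebra R, if d₁, ..., dₙ ∈ R satisfy dᵢdⱼ = 0 for all i,j, then for any multivariate polynomial p ∈ R[X₁,...,Xₙ] and any point x ∈ Rⁿ, p(x + d) = p(x) + ∑ₖ (∂p/∂Xₖ)(x) · dₖ. -/
import Mathlib


open MvPolynomial

/-- Polynomial Kock–Lawvere: in a commutative `ℚ`-algebra, if all pairwise
products `dᵢdⱼ` vanish, then `p(x + d) = p(x) + ∑ₖ (∂p/∂Xₖ)(x) · dₖ`. -/
theorem polynomial_kock_lawvere {R : Type*} [CommRing R] [Algebra ℚ R]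
    (n : ℕ) (d : Fin n → R) (hd : ∀ i j, d i * d j = 0)
    (p : MvPolynomial (Fin n) R) (x : Fin n → R) :
    eval (fun i => x i + d i) p
      = eval x p + ∑ k, eval x (pderiv k p) * d k := by
  induction p using MvPolynomial.induction_on with
  | C a => simp
  | add p q hp hq =>
      simp only [map_add, hp, hq, add_mul, Finset.sum_add_distrib]
      ring
  | mul_X p i hp =>
      have hSd : (∑ k, eval x (pderiv k p) * d k) * d i = 0 := by
        rw [Finset.sum_mul]
        simp [mul_assoc, hd]
      have h1 : ∀ k : Fin n, eval x (pderiv k (p * X i)) * d k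
          = eval x (pderiv k p) * x i * d k
            + (if k = i then eval x p * d i else 0) := by
        intro k
        rw [pderiv_mul, pderiv_X]
        by_cases hk : k = i <;>
          simp [hk, Pi.single_apply, add_mul, mul_assoc]
      have hsum : ∑ k, eval x (pderiv k p) * x i * d k
          = (∑ k, eval x (pderiv k p) * d k) * x i := by
        rw [Finset.sum_mul]
        exact Finset.sum_congr rfl fun k _ => by ring
      rw [map_mul, eval_X, hp,
          Finset.sum_congr rfl (fun k _ => h1 k), Finset.sum_add_distrib,
          Finset.sum_ite_eq' Finset.univ i, if_pos (Finset.mem_univ i),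
          hsum, map_mul, eval_X]
      linear_combination hSd
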